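/- Let L and M be rank 1 torsion-free coherent sheaves on a normal variety X, and suppose there is a surjective map h : L ⊗ M → O_X. Then L and M are both locally free (invertible). -/
import Mathlib


open TensorProduct

section Aux

variable (R : Type*) [CommRing R] [IsDomain R]

/-- In a local ring, if a finite sum is a unit then some summand is a unit. -/
theorem aux_isUnit_of_sum {R : Type*} [CommRing R] [IsLocalRing R] {ι : Type*}
    (s : Finset ι) (f : ι → R) (h : IsUnit (∑ i ∈ s, f i)) : ∃ i ∈ s, IsUnit (f i) := by
  classical
  induction s using Finset.induction_on with
  | empty => rw [Finset.sum_empty] at h; exact absurd rfl h.ne_zero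
  | @insert a t hnot ih =>
    rw [Finset.sum_insert hnot] at h
    rcases IsLocalRing.isUnit_or_isUnit_of_isUnit_add h with h1 | h2
    · exact ⟨a, Finset.mem_insert_self a t, h1⟩
    · obtain ⟨i, hi, hu⟩ := ih h2
      exact ⟨i, Finset.mem_insert_of_mem hi, hu⟩

/-- A finite torsion-free module of generic rank one over a local domain which admits a
linear functional hitting a unit is free of rank one. -/
theorem aux_equiv (L : Type*) [AddCommGroup L] [Module R L]
    [NoZeroSMulDivisors R L]
    (hrk : Module.rank (FractionRing R) (FractionRing R ⊗[R] L) = 1)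
    (φ : L →ₗ[R] R) (α : L) (hu : IsUnit (φ α)) : Nonempty (L ≃ₗ[R] R) := by
  classical
  set K := FractionRing R
  -- the canonical map L → K ⊗ L is injective
  let f : L →ₗ[R] K ⊗[R] L := TensorProduct.mk R K L 1
  have hloc : IsLocalizedModule (nonZeroDivisors R) f :=
    (isLocalizedModule_iff_isBaseChange (nonZeroDivisors R) K f).mpr
      (TensorProduct.isBaseChange R L K)
  have hfinj : Function.Injective f := by
    intro x y hxy
    have : f (x - y) = 0 := by rw [map_sub, hxy, sub_self]
    obtain ⟨s, hs⟩ := (IsLocalizedModule.eq_zero_iff (nonZeroDivisors R) f).mp this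
    have hs0 : (s : R) ≠ 0 := nonZeroDivisors.coe_ne_zero s
    have := (smul_eq_zero.mp hs).resolve_left hs0
    exact sub_eq_zero.mp this
  -- the base-changed functional
  let φK : K ⊗[R] L →ₗ[K] K := ((Algebra.linearMap R K).comp φ).liftBaseChange K
  have hφK : ∀ x : L, φK (f x) = algebraMap R K (φ x) := by
    intro x
    show φK ((1 : K) ⊗ₜ[R] x) = _
    rw [LinearMap.liftBaseChange_tmul]
    simp
  have hαK : φK (f α) ≠ 0 := by
    rw [hφK]
    simpa using fun h0 => hu.ne_zero ((injective_iff_map_eq_zero' _).mp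
      (IsFractionRing.injective R K) (φ α) |>.mp h0)
  -- φK is injective since K ⊗ L has rank 1
  haveI : Module.Free K (K ⊗[R] L) := Module.Free.of_divisionRing K _
  obtain ⟨v₀, hv₀⟩ := rank_le_one_iff.mp hrk.le
  have hφKinj : ∀ v : K ⊗[R] L, φK v = 0 → v = 0 := by
    intro v hv
    obtain ⟨r, hr⟩ := hv₀ v
    obtain ⟨s, hs⟩ := hv₀ (f α)
    have hv₀ne : φK v₀ ≠ 0 := by
      intro h0
      apply hαK
      rw [← hs, map_smul, h0, smul_zero]
    have : r * φK v₀ = 0 := by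
      rw [← smul_eq_mul, ← map_smul, hr, hv]
    rcases mul_eq_zero.mp this with h0 | h0
    · rw [← hr, h0, zero_smul]
    · exact absurd h0 hv₀ne
  -- φ is injective
  have hinj : Function.Injective φ := by
    rw [injective_iff_map_eq_zero]
    intro x hx
    apply hfinj
    rw [map_zero]
    apply hφKinj
    rw [hφK, hx, map_zero]
  -- φ is surjective
  obtain ⟨u, hu'⟩ := hu
  have hsurj : Function.Surjective φ := by
    intro r
    refine ⟨(r * (u⁻¹ : Rˣ)) • α, ?_⟩
    rw [map_smul, ← hu', smul_eq_mul]
    simp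
  exact ⟨LinearEquiv.ofBijective φ ⟨hinj, hsurj⟩⟩

end Aux

/-- local form of the lemma on a normal variety: Let `R` be the local ring
of a point of a normal variety (a local domain), and let `L`, `M` be (stalks of) rank 1
torsion-free modules.  If there is a surjective map `h : L ⊗ M → R`, then `L` and `M`
are both free of rank 1 (i.e. the sheaves are locally free/invertible). -/
theorem rank_one_torsionFree_of_surj_tensor
    (R : Type*) [CommRing R] [IsDomain R] [IsLocalRing R]
    (L M : Type*) [AddCommGroup L] [Module R L] [AddCommGroup M] [Module R M]
    [Module.Finite R L] [Module.Finite R M]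
    [NoZeroSMulDivisors R L] [NoZeroSMulDivisors R M]
    (hrkL : Module.rank (FractionRing R) (FractionRing R ⊗[R] L) = 1)
    (hrkM : Module.rank (FractionRing R) (FractionRing R ⊗[R] M) = 1)
    (h : L ⊗[R] M →ₗ[R] R) (hsurj : Function.Surjective h) :
    Nonempty (L ≃ₗ[R] R) ∧ Nonempty (M ≃ₗ[R] R) := by
  classical
  obtain ⟨x, hx⟩ := hsurj 1
  obtain ⟨S, hS⟩ := TensorProduct.exists_finset x
  have h1 : IsUnit (∑ i ∈ S, h (i.1 ⊗ₜ[R] i.2)) := by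
    rw [← map_sum]
    simp only [← hS, hx]
    exact isUnit_one
  obtain ⟨⟨α, β⟩, _, hαβ⟩ := aux_isUnit_of_sum S _ h1
  constructor
  · exact aux_equiv R L hrkL
      (h ∘ₗ (TensorProduct.mk R L M).flip β) α (by simpa using hαβ)
  · exact aux_equiv R M hrkM
      (h ∘ₗ TensorProduct.mk R L M α) β (by simpa using hαβ)
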